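/- arXiv:1904.07004 — 3 statements merged into one kernel-verified Lean document; each statement's English description precedes it below -/
import Mathlib

section
/- Let F ⊣ U ⊣ G be adjunctions with N a model category, and suppose UF ⊣ UG is a Quillen adjunction on N. Then every morphism f in M having the left lifting property against all morphisms h with U h a fibration satisfies: U f has the left lifting property against all fibrations in N. -/
open CategoryTheory Limits

/-- A (self-contained) packaging of a model structure on a category: classes of weak
equivalences, cofibrations and fibrations satisfying two-out-of-three, the lifting
characterizations of (co)fibrations, and both factorization axioms. -/
structure ModelStructure (E : Type*) [CategoryTheory.Category E] where
  weq : CategoryTheory.MorphismProperty E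
  cof : CategoryTheory.MorphismProperty E
  fib : CategoryTheory.MorphismProperty E
  weq_iso : ∀ {X Y : E} (e : X ≅ Y), weq e.hom
  weq_comp : ∀ {X Y Z : E} (f : X ⟶ Y) (g : Y ⟶ Z), weq f → weq g → weq (f ≫ g)
  weq_of_comp_left : ∀ {X Y Z : E} (f : X ⟶ Y) (g : Y ⟶ Z), weq g → weq (f ≫ g) → weq f
  weq_of_comp_right : ∀ {X Y Z : E} (f : X ⟶ Y) (g : Y ⟶ Z), weq f → weq (f ≫ g) → weq g
  cof_iff : ∀ {A B : E} (i : A ⟶ B), cof i ↔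
    ∀ {X Y : E} (p : X ⟶ Y), fib p → weq p → CategoryTheory.HasLiftingProperty i p
  fib_iff : ∀ {X Y : E} (p : X ⟶ Y), fib p ↔
    ∀ {A B : E} (i : A ⟶ B), cof i → weq i → CategoryTheory.HasLiftingProperty i p
  fact_left : ∀ {X Y : E} (f : X ⟶ Y),
    ∃ (Z : E) (i : X ⟶ Z) (p : Z ⟶ Y), cof i ∧ weq i ∧ fib p ∧ i ≫ p = f
  fact_right : ∀ {X Y : E} (f : X ⟶ Y),
    ∃ (Z : E) (i : X ⟶ Z) (p : Z ⟶ Y), cof i ∧ fib p ∧ weq p ∧ i ≫ p = f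

/-- If `F ⊣ U ⊣ G` with `N` a model category and `UF ⊣ UG` a Quillen adjunction, then any
morphism `f` of `M` with the left lifting property against all morphisms `h` with `U h` a
fibration has the property that `U f` has the left lifting property against all
fibrations of `N`. -/
theorem stmt2 {M N : Type*} [Category M] [Category N] (S : ModelStructure N)
    (F : N ⥤ M) (U : M ⥤ N) (G : N ⥤ M)
    (adj₁ : F ⊣ U) (adj₂ : U ⊣ G)
    (hUG_fib : ∀ {X Y : N} (p : X ⟶ Y), S.fib p → S.fib ((G ⋙ U).map p))
    (hUG_acycfib : ∀ {X Y : N} (p : X ⟶ Y), S.fib p → S.weq p →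
      S.fib ((G ⋙ U).map p) ∧ S.weq ((G ⋙ U).map p))
    {A B : M} (f : A ⟶ B)
    (hf : ∀ {X Y : M} (h : X ⟶ Y), S.fib (U.map h) → HasLiftingProperty f h) :
    ∀ {X Y : N} (p : X ⟶ Y), S.fib p → HasLiftingProperty (U.map f) p := by
  intro X Y p hp
  rw [adj₂.hasLiftingProperty_iff]
  exact hf (G.map p) (hUG_fib p hp)
end

section
/- Let F ⊣ U ⊣ G be adjunctions with N a model category such that UF ⊣ UG is Quillen. Then every morphism in M with left lifting against all U-acyclic U-fibrations (projective cofibration) has the property that its U-image is a cofibration in N. -/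
open CategoryTheory Limits

/-- If `F ⊣ U ⊣ G` with `N` a model category and `UF ⊣ UG` a Quillen adjunction, then any
projective cofibration (morphism with left lifting against all `U`-acyclic
`U`-fibrations) has the property that its `U`-image is a cofibration in `N`, i.e. has the
left lifting property against every acyclic fibration of `N`. -/
theorem stmt3 {M N : Type*} [Category M] [Category N] (S : ModelStructure N)
    (F : N ⥤ M) (U : M ⥤ N) (G : N ⥤ M)
    (adj₁ : F ⊣ U) (adj₂ : U ⊣ G)
    (hUG_fib : ∀ {X Y : N} (p : X ⟶ Y), S.fib p → S.fib ((G ⋙ U).map p))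
    (hUG_acycfib : ∀ {X Y : N} (p : X ⟶ Y), S.fib p → S.weq p →
      S.fib ((G ⋙ U).map p) ∧ S.weq ((G ⋙ U).map p))
    {A B : M} (f : A ⟶ B)
    (hf : ∀ {X Y : M} (h : X ⟶ Y), S.fib (U.map h) → S.weq (U.map h) →
      HasLiftingProperty f h) :
    ∀ {X Y : N} (p : X ⟶ Y), S.fib p → S.weq p → HasLiftingProperty (U.map f) p := by
  intro X Y p hp hw
  obtain ⟨h1, h2⟩ := hUG_acycfib p hp hw
  exact (adj₂.hasLiftingProperty_iff f p).2 (hf (G.map p) h1 h2)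
end

section
/- Let P(n+1) denote the poset of proper subsets of the (n+1)-element set {0,1,…,n}, and let A be the category (a ← b → c). The functor q : P(n+1) → A sending {1,…,n} to a, every proper subset of {1,…,n} to b, and every subset containing 0 to c, is a well-defined functor and is a Grothendieck opfibration; moreover the induced functor q⁻¹(b) → q⁻¹(c) given by adjoining the element 0 is an isomorphism of categories, and both fibers q⁻¹(b) and q⁻¹(c) are isomorphic to P(n). -/
open CategoryTheory Limits

/-- The poset of proper subsets of an `m`-element set, as a category. -/
abbrev ProperSubsets (m : ℕ) := {S : Finset (Fin m) // S ≠ Finset.univ}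

/-- A functor `q : E ⥤ A` is a Grothendieck opfibration: every morphism of `A` out of
the image of an object `X` admits a cocartesian lift out of `X`. -/
def IsOpfibration {E A : Type*} [Category E] [Category A] (q : E ⥤ A) : Prop :=
  ∀ (X : E) (Y : A) (f : q.obj X ⟶ Y),
    ∃ (X' : E) (φ : X ⟶ X') (h : q.obj X' = Y),
      q.map φ ≫ eqToHom h = f ∧
      ∀ (Z : E) (ψ : X ⟶ Z) (g : q.obj X' ⟶ q.obj Z),
        q.map φ ≫ g = q.map ψ → ∃! χ : X' ⟶ Z, q.map χ = g ∧ φ ≫ χ = ψ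

/-- The prescribed object assignment: `{1,…,n}` goes to `a` (= left), proper subsets of
`{1,…,n}` go to `b` (= zero), and subsets containing `0` go to `c` (= right). -/
noncomputable def qObj (n : ℕ) (S : ProperSubsets (n + 1)) : WalkingSpan :=
  if S.1 = Finset.univ.erase 0 then WalkingSpan.left
  else if (0 : Fin (n + 1)) ∈ S.1 then WalkingSpan.right
  else WalkingSpan.zero

namespace Stmt12Aux

lemma hom_cases {X Y : WalkingSpan} (f : X ⟶ Y) : X = WalkingSpan.zero ∨ X = Y := by
  cases (show WidePushoutShape.Hom X Y from f) with
  | id => right; rfl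
  | init j => left; rfl

/-- Build a hom in the walking span. -/
def toHom : (X Y : WalkingSpan) → (X = WalkingSpan.zero ∨ X = Y) → (X ⟶ Y)
  | none, none, _ => 𝟙 _
  | none, some j, _ => WidePushoutShape.Hom.init j
  | some _, _, h => eqToHom (h.resolve_left (by simp [WalkingSpan.zero]))

lemma left_ne_zero : WalkingSpan.left ≠ WalkingSpan.zero := by
  simp [WalkingSpan.left, WalkingSpan.zero]

lemma right_ne_zero : WalkingSpan.right ≠ WalkingSpan.zero := by
  simp [WalkingSpan.right, WalkingSpan.zero]

variable {n : ℕ}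

lemma qObj_left {S : ProperSubsets (n + 1)} (h : S.1 = Finset.univ.erase 0) :
    qObj n S = WalkingSpan.left := by simp [qObj, h]

lemma qObj_right {S : ProperSubsets (n + 1)} (h1 : S.1 ≠ Finset.univ.erase 0)
    (h2 : (0 : Fin (n + 1)) ∈ S.1) : qObj n S = WalkingSpan.right := by
  simp [qObj, h1, h2]

lemma qObj_zero {S : ProperSubsets (n + 1)} (h1 : S.1 ≠ Finset.univ.erase 0)
    (h2 : (0 : Fin (n + 1)) ∉ S.1) : qObj n S = WalkingSpan.zero := by
  simp [qObj, h1, h2]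

lemma eq_of_qObj_left {S : ProperSubsets (n + 1)} (h : qObj n S = WalkingSpan.left) :
    S.1 = Finset.univ.erase 0 := by
  by_contra hc
  by_cases h0 : (0 : Fin (n + 1)) ∈ S.1
  · rw [qObj_right hc h0] at h
    exact absurd (Option.some.inj h) (by simp)
  · exact left_ne_zero ((qObj_zero hc h0) ▸ h).symm

lemma of_qObj_zero {S : ProperSubsets (n + 1)} (h : qObj n S = WalkingSpan.zero) :
    S.1 ≠ Finset.univ.erase 0 ∧ (0 : Fin (n + 1)) ∉ S.1 := by
  constructor
  · intro hc; exact left_ne_zero ((qObj_left hc) ▸ h)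
  · intro hc
    by_cases h1 : S.1 = Finset.univ.erase 0
    · exact left_ne_zero ((qObj_left h1) ▸ h)
    · exact right_ne_zero ((qObj_right h1 hc) ▸ h)

lemma mem_of_qObj_right {S : ProperSubsets (n + 1)} (h : qObj n S = WalkingSpan.right) :
    (0 : Fin (n + 1)) ∈ S.1 := by
  by_contra hc
  by_cases h1 : S.1 = Finset.univ.erase 0
  · rw [qObj_left h1] at h
    exact absurd (Option.some.inj h) (by simp)
  · exact right_ne_zero ((qObj_zero h1 hc) ▸ h).symm

lemma ne_erase_of_qObj_right {S : ProperSubsets (n + 1)} (h : qObj n S = WalkingSpan.right) :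
    S.1 ≠ Finset.univ.erase 0 := by
  intro hc
  exact (Finset.notMem_erase (0 : Fin (n + 1)) Finset.univ) (hc ▸ mem_of_qObj_right h)

/-- The only proper subset containing `univ.erase 0` is itself. -/
lemma eq_erase_of_superset {T : ProperSubsets (n + 1)}
    (h : Finset.univ.erase (0 : Fin (n + 1)) ⊆ T.1) : T.1 = Finset.univ.erase 0 := by
  have h0 : (0 : Fin (n + 1)) ∉ T.1 := by
    intro h0
    apply T.2
    apply Finset.eq_univ_iff_forall.mpr
    intro x
    by_cases hx : x = 0
    · exact hx ▸ h0
    · exact h (Finset.mem_erase.mpr ⟨hx, Finset.mem_univ x⟩)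
  exact le_antisymm (Finset.subset_erase.mpr ⟨Finset.subset_univ _, h0⟩) h

lemma le_cases {S T : ProperSubsets (n + 1)} (h : S ≤ T) :
    qObj n S = WalkingSpan.zero ∨ qObj n S = qObj n T := by
  have hsub : S.1 ⊆ T.1 := h
  by_cases h1 : S.1 = Finset.univ.erase 0
  · right
    rw [qObj_left h1, qObj_left (eq_erase_of_superset (h1 ▸ hsub))]
  · by_cases h0 : (0 : Fin (n + 1)) ∈ S.1
    · right
      have h0T : (0 : Fin (n + 1)) ∈ T.1 := hsub h0
      have hT : T.1 ≠ Finset.univ.erase 0 := by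
        intro hc; rw [hc] at h0T; exact (Finset.notMem_erase 0 _) h0T
      rw [qObj_right h1 h0, qObj_right hT h0T]
    · left; exact qObj_zero h1 h0

/-- The functor `q`. -/
noncomputable def qF (n : ℕ) : ProperSubsets (n + 1) ⥤ WalkingSpan where
  obj := qObj n
  map {S T} f := toHom _ _ (le_cases (leOfHom f))
  map_id _ := Subsingleton.elim _ _
  map_comp _ _ := Subsingleton.elim _ _

instance {W : WalkingSpan} (a b : (qF n).Fiber W) : Subsingleton (a ⟶ b) :=
  ⟨fun f g => Functor.Fiber.hom_ext (Subsingleton.elim (α := a.1 ⟶ b.1) _ _)⟩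

/-- Build a hom in a fiber from an inequality. -/
def fiberHom {W : WalkingSpan} {a b : (qF n).Fiber W} (h : a.1.1 ⊆ b.1.1) : a ⟶ b :=
  ⟨homOfLE h, IsHomLift.of_fac _ _ _ a.2 b.2 (Subsingleton.elim _ _)⟩

lemma fiber_obj_ext {W : WalkingSpan} {a b : (qF n).Fiber W} (h : a.1.1 = b.1.1) : a = b :=
  Subtype.ext (Subtype.ext h)

lemma insert_zero_proper {X : ProperSubsets (n + 1)} (hne : X.1 ≠ Finset.univ.erase 0)
    (h0 : (0 : Fin (n + 1)) ∉ X.1) : insert (0 : Fin (n + 1)) X.1 ≠ Finset.univ := by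
  intro hc
  exact hne (by rw [← Finset.erase_insert h0, hc])

lemma insert_zero_ne_erase (s : Finset (Fin (n + 1))) :
    insert (0 : Fin (n + 1)) s ≠ Finset.univ.erase 0 := by
  intro hc
  exact (Finset.notMem_erase (0 : Fin (n + 1)) Finset.univ)
    (hc ▸ Finset.mem_insert_self 0 s)

/-- Fiber over `zero` to fiber over `right`: adjoin `0`. -/
noncomputable def toRight : (qF n).Fiber WalkingSpan.zero ⥤ (qF n).Fiber WalkingSpan.right where
  obj X := ⟨⟨insert 0 X.1.1, insert_zero_proper (of_qObj_zero X.2).1 (of_qObj_zero X.2).2⟩,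
    qObj_right (insert_zero_ne_erase _) (Finset.mem_insert_self 0 X.1.1)⟩
  map {a b} f := fiberHom (Finset.insert_subset_insert 0 (leOfHom f.1))
  map_id _ := Functor.Fiber.hom_ext (Subsingleton.elim _ _)
  map_comp _ _ := Functor.Fiber.hom_ext (Subsingleton.elim _ _)

lemma erase_zero_proper {Y : ProperSubsets (n + 1)} :
    Y.1.erase (0 : Fin (n + 1)) ≠ Finset.univ := by
  intro hc
  exact (Finset.notMem_erase (0 : Fin (n + 1)) Y.1) (by rw [hc]; exact Finset.mem_univ 0)

lemma erase_zero_ne {Y : ProperSubsets (n + 1)} (h0 : (0 : Fin (n + 1)) ∈ Y.1) :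
    Y.1.erase (0 : Fin (n + 1)) ≠ Finset.univ.erase 0 := by
  intro hc
  apply Y.2
  have h1 : Y.1 = insert 0 (Y.1.erase 0) := (Finset.insert_erase h0).symm
  rw [h1, hc, Finset.insert_erase (Finset.mem_univ (0 : Fin (n + 1)))]

/-- Fiber over `right` to fiber over `zero`: remove `0`. -/
noncomputable def toZero : (qF n).Fiber WalkingSpan.right ⥤ (qF n).Fiber WalkingSpan.zero where
  obj Y := ⟨⟨Y.1.1.erase 0, erase_zero_proper⟩,
    qObj_zero (erase_zero_ne (mem_of_qObj_right Y.2)) (Finset.notMem_erase 0 _)⟩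
  map {a b} f := fiberHom (Finset.erase_subset_erase 0 (leOfHom f.1))
  map_id _ := Functor.Fiber.hom_ext (Subsingleton.elim _ _)
  map_comp _ _ := Functor.Fiber.hom_ext (Subsingleton.elim _ _)

/-- Fiber over `zero` to `ProperSubsets n`: pull back along `succ`. -/
noncomputable def zeroToP : (qF n).Fiber WalkingSpan.zero ⥤ ProperSubsets n where
  obj X := ⟨Finset.univ.filter (fun i : Fin n => i.succ ∈ X.1.1), by
    intro hc
    apply (of_qObj_zero X.2).1
    apply eq_erase_of_superset (T := X.1)
    intro x hx
    obtain ⟨hx0, -⟩ := Finset.mem_erase.mp hx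
    rcases Fin.eq_zero_or_eq_succ x with h | ⟨i, rfl⟩
    · exact absurd h hx0
    · have : i ∈ Finset.univ.filter (fun i : Fin n => i.succ ∈ X.1.1) := by
        rw [hc]; exact Finset.mem_univ i
      exact (Finset.mem_filter.mp this).2⟩
  map {a b} f := homOfLE (by
    intro i hi
    simp only [Finset.mem_filter, Finset.mem_univ, true_and] at hi ⊢
    exact (leOfHom f.1 : a.1.1 ⊆ b.1.1) hi)
  map_id _ := Subsingleton.elim _ _
  map_comp _ _ := Subsingleton.elim _ _

lemma map_succ_ne_erase {S : ProperSubsets n} :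
    S.1.map (Fin.succEmb n) ≠ Finset.univ.erase 0 := by
  intro hc
  have h1 : S.1.card = n := by
    have := congrArg Finset.card hc
    rw [Finset.card_map, Finset.card_erase_of_mem (Finset.mem_univ (0 : Fin (n + 1)))] at this
    simpa using this
  have h3 : S.1.card < n := by
    simpa using Finset.card_lt_card (Finset.ssubset_univ_iff.mpr S.2)
  omega

/-- `ProperSubsets n` to fiber over `zero`: push forward along `succ`. -/
noncomputable def pToZero : ProperSubsets n ⥤ (qF n).Fiber WalkingSpan.zero where
  obj S := ⟨⟨S.1.map (Fin.succEmb n), by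
      intro hc
      have : (0 : Fin (n + 1)) ∈ S.1.map (Fin.succEmb n) := hc ▸ Finset.mem_univ 0
      obtain ⟨i, -, hi⟩ := Finset.mem_map.mp this
      exact Fin.succ_ne_zero i hi⟩,
    qObj_zero map_succ_ne_erase (by
      intro hc
      obtain ⟨i, -, hi⟩ := Finset.mem_map.mp hc
      exact Fin.succ_ne_zero i hi)⟩
  map {a b} f := fiberHom (Finset.map_subset_map.mpr (leOfHom f))
  map_id _ := Functor.Fiber.hom_ext (Subsingleton.elim _ _)
  map_comp _ _ := Functor.Fiber.hom_ext (Subsingleton.elim _ _)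

lemma toRight_toZero : (toRight ⋙ toZero : (qF n).Fiber WalkingSpan.zero ⥤ _) = 𝟭 _ := by
  refine CategoryTheory.Functor.ext (fun X => fiber_obj_ext ?_) (fun _ _ _ => Subsingleton.elim _ _)
  show (insert (0 : Fin (n + 1)) X.1.1).erase 0 = X.1.1
  exact Finset.erase_insert (of_qObj_zero X.2).2

lemma toZero_toRight : (toZero ⋙ toRight : (qF n).Fiber WalkingSpan.right ⥤ _) = 𝟭 _ := by
  refine CategoryTheory.Functor.ext (fun Y => fiber_obj_ext ?_) (fun _ _ _ => Subsingleton.elim _ _)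
  show insert (0 : Fin (n + 1)) (Y.1.1.erase 0) = Y.1.1
  exact Finset.insert_erase (mem_of_qObj_right Y.2)

lemma pToZero_zeroToP : (pToZero ⋙ zeroToP : ProperSubsets n ⥤ _) = 𝟭 _ := by
  refine CategoryTheory.Functor.ext (fun S => Subtype.ext ?_) (fun _ _ _ => Subsingleton.elim _ _)
  show Finset.univ.filter (fun i : Fin n => i.succ ∈ S.1.map (Fin.succEmb n)) = S.1
  ext i
  simp only [Finset.mem_filter, Finset.mem_univ, true_and]
  constructor
  · intro hi
    obtain ⟨j, hj, hji⟩ := Finset.mem_map.mp hi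
    have : j = i := Fin.succ_injective n hji
    exact this ▸ hj
  · intro hi
    exact Finset.mem_map.mpr ⟨i, hi, rfl⟩

lemma zeroToP_pToZero : (zeroToP ⋙ pToZero : (qF n).Fiber WalkingSpan.zero ⥤ _) = 𝟭 _ := by
  refine CategoryTheory.Functor.ext (fun X => fiber_obj_ext ?_) (fun _ _ _ => Subsingleton.elim _ _)
  show (Finset.univ.filter (fun i : Fin n => i.succ ∈ X.1.1)).map (Fin.succEmb n) = X.1.1
  ext x
  simp only [Finset.mem_map, Finset.mem_filter, Finset.mem_univ, true_and]
  constructor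
  · rintro ⟨i, hi, rfl⟩
    exact hi
  · intro hx
    rcases Fin.eq_zero_or_eq_succ x with h | ⟨i, rfl⟩
    · exact absurd (h ▸ hx) (of_qObj_zero X.2).2
    · exact ⟨i, hx, rfl⟩

/-- The iso of categories between the fibers over `zero` and `right`. -/
noncomputable def catIsoZR (n : ℕ) :
    Cat.of ((qF n).Fiber WalkingSpan.zero) ≅ Cat.of ((qF n).Fiber WalkingSpan.right) where
  hom := toRight.toCatHom
  inv := toZero.toCatHom
  hom_inv_id := Cat.Hom.ext toRight_toZero
  inv_hom_id := Cat.Hom.ext toZero_toRight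

/-- The iso of categories between the fiber over `zero` and `ProperSubsets n`. -/
noncomputable def catIsoZP (n : ℕ) :
    Cat.of ((qF n).Fiber WalkingSpan.zero) ≅ Cat.of (ProperSubsets n) where
  hom := zeroToP.toCatHom
  inv := pToZero.toCatHom
  hom_inv_id := Cat.Hom.ext zeroToP_pToZero
  inv_hom_id := Cat.Hom.ext pToZero_zeroToP

end Stmt12Aux

open Stmt12Aux in
/-- The assignment `qObj` extends to a functor `q` from the poset of proper subsets of
the `(n+1)`-element set to the walking span `(a ← b → c)`; this functor is a
Grothendieck opfibration; the induced functor from the fiber over `b` to the fiber over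
`c` given by adjoining the element `0` is an isomorphism of categories; and both of
these fibers are isomorphic to the poset of proper subsets of an `n`-element set. -/
theorem stmt12 (n : ℕ) :
    ∃ q : ProperSubsets (n + 1) ⥤ WalkingSpan,
      (∀ S, q.obj S = qObj n S) ∧
      IsOpfibration q ∧
      (∃ e : Cat.of (q.Fiber WalkingSpan.zero) ≅ Cat.of (q.Fiber WalkingSpan.right),
        ∀ X : q.Fiber WalkingSpan.zero, (e.hom.toFunctor.obj X).1.1 = insert 0 X.1.1) ∧
      Nonempty (Cat.of (q.Fiber WalkingSpan.zero) ≅ Cat.of (ProperSubsets n)) ∧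
      Nonempty (Cat.of (q.Fiber WalkingSpan.right) ≅ Cat.of (ProperSubsets n)) := by
  refine ⟨qF n, fun S => rfl, ?_, ⟨catIsoZR n, fun X => rfl⟩, ⟨catIsoZP n⟩, ⟨(catIsoZR n).symm ≪≫ catIsoZP n⟩⟩
  -- opfibration
  intro X Y f
  rcases hom_cases f with h | h
  · -- q.obj X = zero
    obtain ⟨hne, h0⟩ := of_qObj_zero (n := n) h
    match Y with
    | none =>
      refine ⟨X, 𝟙 X, h, Subsingleton.elim _ _, ?_⟩
      intro Z ψ g _
      exact ⟨ψ, ⟨Subsingleton.elim _ _, Subsingleton.elim _ _⟩,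
        fun χ _ => Subsingleton.elim _ _⟩
    | some WalkingPair.left =>
      have hproper : (Finset.univ.erase (0 : Fin (n + 1))) ≠ Finset.univ := by
        intro hc
        exact (Finset.notMem_erase (0 : Fin (n + 1)) Finset.univ)
          (by rw [hc]; exact Finset.mem_univ (0 : Fin (n + 1)))
      have hX' : (qF n).obj ⟨Finset.univ.erase 0, hproper⟩ = WalkingSpan.left :=
        qObj_left (S := ⟨Finset.univ.erase 0, hproper⟩) rfl
      refine ⟨⟨Finset.univ.erase 0, hproper⟩,
        homOfLE (Finset.subset_erase.mpr ⟨Finset.subset_univ _, h0⟩ :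
          X.1 ≤ Finset.univ.erase 0),
        hX', Subsingleton.elim _ _, ?_⟩
      intro Z ψ g _
      rcases hom_cases g with hg | hg
      · exact absurd (hX' ▸ hg) left_ne_zero
      · have hZ : Z.1 = Finset.univ.erase 0 :=
          eq_of_qObj_left ((hX' ▸ hg).symm)
        exact ⟨homOfLE (le_of_eq hZ.symm : (Finset.univ.erase (0 : Fin (n+1))) ≤ Z.1),
          ⟨Subsingleton.elim _ _, Subsingleton.elim _ _⟩,
          fun χ _ => Subsingleton.elim _ _⟩
    | some WalkingPair.right =>
      have hX' : (qF n).obj ⟨insert 0 X.1, insert_zero_proper hne h0⟩ = WalkingSpan.right :=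
        qObj_right (S := ⟨insert 0 X.1, insert_zero_proper hne h0⟩)
          (insert_zero_ne_erase _) (Finset.mem_insert_self 0 X.1)
      refine ⟨⟨insert 0 X.1, insert_zero_proper hne h0⟩,
        homOfLE (Finset.subset_insert 0 X.1 : X.1 ≤ insert 0 X.1),
        hX', Subsingleton.elim _ _, ?_⟩
      intro Z ψ g _
      rcases hom_cases g with hg | hg
      · exact absurd (hX' ▸ hg) right_ne_zero
      · have hZ : (0 : Fin (n + 1)) ∈ Z.1 :=
          mem_of_qObj_right ((hX' ▸ hg).symm)
        have hXZ : X.1 ⊆ Z.1 := leOfHom ψ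
        exact ⟨homOfLE (Finset.insert_subset_iff.mpr ⟨hZ, hXZ⟩ :
            insert (0 : Fin (n + 1)) X.1 ≤ Z.1),
          ⟨Subsingleton.elim _ _, Subsingleton.elim _ _⟩,
          fun χ _ => Subsingleton.elim _ _⟩
  · refine ⟨X, 𝟙 X, h, Subsingleton.elim _ _, ?_⟩
    intro Z ψ g _
    exact ⟨ψ, ⟨Subsingleton.elim _ _, Subsingleton.elim _ _⟩,
      fun χ _ => Subsingleton.elim _ _⟩
end
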